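/- In the algebra 𝔸^d_q(Λ̂), the ℚ[q]-subspace W spanned by all differences μ − σ(μ), where μ ∈ ℕ^m and σ(μ) is any permutation of the entries of μ, is a two-sided ideal: for any basis element w ∈ ℕ^n, both (μ − σ(μ)) * w and w * (μ − σ(μ)) lie in W. -/

import Mathlib

open MvPolynomial Finset

noncomputable section

/-- The quantization variable `q` in `ℚ[q]`. -/
def qv : Polynomial ℚ := Polynomial.X

/-- The kernel polynomial `g_{m,n} = ∏_{s=m+1}^{m+n} ∏_{t=1}^{m} (x_s - q x_t)^{d-1}`. -/
def gPoly (d m n : ℕ) : MvPolynomial ℕ (Polynomial ℚ) :=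
  ∏ s ∈ Finset.Ico m (m + n), ∏ t ∈ Finset.range m, (X s - C qv * X t) ^ (d - 1)

/-- `Λ̂`, the disjoint union of all `ℕ^n` for `n ≥ 0`. -/
def LambdaHat : Type := Σ n : ℕ, (Fin n → ℕ)

instance : DecidableEq LambdaHat := fun _ _ => Classical.dec _

/-- The product of two basis elements of `𝔸^d_q(Λ̂)`:
`μ * ν = ∑_{a,b} c_{m,n}^{a,b} (μ+a, ν+b)`, realised as a sum over the
monomials `e` in the support of `g_{m,n}` with `a i = e i`, `b j = e (m+j)`. -/
def basisMul (d : ℕ) (μ ν : LambdaHat) : LambdaHat →₀ Polynomial ℚ :=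
  ∑ e ∈ (gPoly d μ.1 ν.1).support,
    Finsupp.single
      ⟨μ.1 + ν.1, Fin.append (fun i => μ.2 i + e (i : ℕ)) (fun j => ν.2 j + e (μ.1 + (j : ℕ)))⟩
      (MvPolynomial.coeff e (gPoly d μ.1 ν.1))

/-- The bilinear extension of `basisMul` to `𝔸^d_q(Λ̂)`. -/
def amul (d : ℕ) (f g : LambdaHat →₀ Polynomial ℚ) : LambdaHat →₀ Polynomial ℚ :=
  ∑ μ ∈ f.support, ∑ ν ∈ g.support, (f μ * g ν) • basisMul d μ ν

/-- The `ℚ[q]`-subspace `W` of `𝔸^d_q(Λ̂)` spanned by all differences `μ − σ(μ)`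
with `σ(μ)` a permutation of the entries of `μ`. -/
def Wspan : Submodule (Polynomial ℚ) (LambdaHat →₀ Polynomial ℚ) :=
  Submodule.span (Polynomial ℚ)
    {x | ∃ (m : ℕ) (μ : Fin m → ℕ) (σ : Equiv.Perm (Fin m)),
      x = Finsupp.single (⟨m, μ⟩ : LambdaHat) 1 - Finsupp.single (⟨m, μ ∘ σ⟩ : LambdaHat) 1}

/-! ### Auxiliary machinery -/

/-- The equivalence between `Fin m` and the block `[k, k+m)` of `ℕ`. -/
def blockEquiv (k m : ℕ) : Fin m ≃ {j : ℕ // k ≤ j ∧ j < k + m} where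
  toFun i := ⟨k + i, by omega⟩
  invFun j := ⟨j.1 - k, by omega⟩
  left_inv i := by ext; simp
  right_inv j := by ext; have := j.2; simp; omega

/-- Extend a permutation of `Fin m` to a permutation of `ℕ`, acting on the block `[k, k+m)`. -/
def shiftPerm (k m : ℕ) (σ : Equiv.Perm (Fin m)) : Equiv.Perm ℕ :=
  σ.extendDomain (blockEquiv k m)

lemma shiftPerm_apply_add (k m : ℕ) (σ : Equiv.Perm (Fin m)) (i : Fin m) :
    shiftPerm k m σ (k + i) = k + σ i := by
  have h := Equiv.Perm.extendDomain_apply_image σ (blockEquiv k m) i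
  simpa [blockEquiv, shiftPerm] using h

lemma shiftPerm_apply_of_not (k m : ℕ) (σ : Equiv.Perm (Fin m)) {j : ℕ}
    (h : ¬ (k ≤ j ∧ j < k + m)) : shiftPerm k m σ j = j :=
  Equiv.Perm.extendDomain_apply_not_subtype σ (blockEquiv k m) h

/-- The core symmetry lemma: if `g` is invariant under the variable permutation `π`, and
`Fb ∘ mapDomain π.symm = (· ∘ τ) ∘ Fa`, then the difference of the two weighted sums of
basis vectors lies in `Wspan`. -/
lemma mem_Wspan_core (N : ℕ) (g : MvPolynomial ℕ (Polynomial ℚ)) (π : Equiv.Perm ℕ)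
    (hg : rename π g = g) (τ : Equiv.Perm (Fin N)) (Fa Fb : (ℕ →₀ ℕ) → Fin N → ℕ)
    (hF : ∀ e, Fb (Finsupp.mapDomain ⇑π.symm e) = Fa e ∘ τ) :
    (∑ e ∈ g.support, Finsupp.single (⟨N, Fa e⟩ : LambdaHat) (coeff e g))
      - (∑ e ∈ g.support, Finsupp.single (⟨N, Fb e⟩ : LambdaHat) (coeff e g)) ∈ Wspan := by
  have hsymm : ∀ e, coeff (Finsupp.mapDomain ⇑π.symm e) g = coeff e g := by
    intro e
    have h1 := coeff_rename_mapDomain (⇑π) π.injective g (Finsupp.mapDomain ⇑π.symm e)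
    rw [hg] at h1
    rw [← h1]
    congr 1
    rw [← Finsupp.mapDomain_comp]
    simp
  have hsum2 : ∑ e ∈ g.support, Finsupp.single (⟨N, Fb e⟩ : LambdaHat) (coeff e g)
      = ∑ e ∈ g.support, Finsupp.single (⟨N, Fa e ∘ τ⟩ : LambdaHat) (coeff e g) := by
    refine Finset.sum_nbij' (Finsupp.mapDomain ⇑π) (Finsupp.mapDomain ⇑π.symm)
      ?_ ?_ ?_ ?_ ?_
    · intro e he
      rw [MvPolynomial.mem_support_iff] at he ⊢
      rwa [show coeff (Finsupp.mapDomain ⇑π e) g = coeff e g from by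
        rw [← hsymm (Finsupp.mapDomain ⇑π e), ← Finsupp.mapDomain_comp]; simp]
    · intro e he
      rw [MvPolynomial.mem_support_iff] at he ⊢
      rwa [hsymm]
    · intro e _; rw [← Finsupp.mapDomain_comp]; simp
    · intro e _; rw [← Finsupp.mapDomain_comp]; simp
    · intro e _
      rw [show Fb e = Fa (Finsupp.mapDomain ⇑π e) ∘ τ from by
        rw [← hF, ← Finsupp.mapDomain_comp]; simp]
      rw [show coeff e g = coeff (Finsupp.mapDomain ⇑π e) g from by
        rw [← hsymm (Finsupp.mapDomain ⇑π e), ← Finsupp.mapDomain_comp]; simp]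
  rw [hsum2, ← Finset.sum_sub_distrib]
  refine Submodule.sum_mem _ fun e _ => ?_
  have : Finsupp.single (⟨N, Fa e⟩ : LambdaHat) (coeff e g)
      - Finsupp.single (⟨N, Fa e ∘ τ⟩ : LambdaHat) (coeff e g)
      = coeff e g • (Finsupp.single (⟨N, Fa e⟩ : LambdaHat) 1
        - Finsupp.single (⟨N, Fa e ∘ τ⟩ : LambdaHat) 1) := by
    rw [smul_sub, Finsupp.smul_single, Finsupp.smul_single, smul_eq_mul, mul_one]
  rw [this]
  refine Submodule.smul_mem _ _ ?_
  unfold Wspan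
  apply Submodule.subset_span (R := Polynomial ℚ) (M := LambdaHat →₀ Polynomial ℚ)
  exact ⟨N, Fa e, τ, rfl⟩

lemma amul_single_sub (d : ℕ) (a b c : LambdaHat) :
    amul d (Finsupp.single a 1 - Finsupp.single b 1) (Finsupp.single c 1)
      = basisMul d a c - basisMul d b c := by
  by_cases hab : a = b
  · simp [amul, hab]
  · set f : LambdaHat →₀ Polynomial ℚ := Finsupp.single a 1 - Finsupp.single b 1 with hf
    have hfa : f a = 1 := by simp [hf, Finsupp.single_apply, hab, Ne.symm hab]
    have hfb : f b = -1 := by simp [hf, Finsupp.single_apply, hab, Ne.symm hab]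
    have hsub : f.support ⊆ {a, b} := by
      intro x hx
      rw [Finsupp.mem_support_iff] at hx
      rw [Finset.mem_insert, Finset.mem_singleton]
      by_contra hc
      push_neg at hc
      exact hx (by simp [hf, Finsupp.single_eq_of_ne' (Ne.symm hc.1),
        Finsupp.single_eq_of_ne' (Ne.symm hc.2)])
    have hsupc : (Finsupp.single c (1 : Polynomial ℚ)).support = {c} :=
      Finsupp.support_single_ne_zero c one_ne_zero
    rw [amul]
    rw [Finset.sum_subset hsub ?zero]
    case zero =>
      intro x _ hx
      rw [Finsupp.notMem_support_iff] at hx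
      simp [hx]
    rw [Finset.sum_pair hab, hsupc]
    simp [hfa, hfb, sub_eq_add_neg]

lemma amul_sub_single (d : ℕ) (a b c : LambdaHat) :
    amul d (Finsupp.single c 1) (Finsupp.single a 1 - Finsupp.single b 1)
      = basisMul d c a - basisMul d c b := by
  by_cases hab : a = b
  · simp [amul, hab]
  · set f : LambdaHat →₀ Polynomial ℚ := Finsupp.single a 1 - Finsupp.single b 1 with hf
    have hfa : f a = 1 := by simp [hf, Finsupp.single_apply, hab, Ne.symm hab]
    have hfb : f b = -1 := by simp [hf, Finsupp.single_apply, hab, Ne.symm hab]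
    have hsub : f.support ⊆ {a, b} := by
      intro x hx
      rw [Finsupp.mem_support_iff] at hx
      rw [Finset.mem_insert, Finset.mem_singleton]
      by_contra hc
      push_neg at hc
      exact hx (by simp [hf, Finsupp.single_eq_of_ne' (Ne.symm hc.1),
        Finsupp.single_eq_of_ne' (Ne.symm hc.2)])
    have hsupc : (Finsupp.single c (1 : Polynomial ℚ)).support = {c} :=
      Finsupp.support_single_ne_zero c one_ne_zero
    rw [amul, hsupc, Finset.sum_singleton]
    rw [Finset.sum_subset hsub ?zero]
    case zero =>
      intro x _ hx
      rw [Finsupp.notMem_support_iff] at hx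
      simp [hx]
    rw [Finset.sum_pair hab]
    simp [hfa, hfb, sub_eq_add_neg]

lemma rename_gPoly_left (d m n : ℕ) (σ : Equiv.Perm (Fin m)) :
    rename (⇑(shiftPerm 0 m σ)) (gPoly d m n) = gPoly d m n := by
  rw [gPoly, map_prod]
  refine Finset.prod_congr rfl fun s hs => ?_
  rw [Finset.mem_Ico] at hs
  rw [map_prod]
  have hπs : shiftPerm 0 m σ s = s := shiftPerm_apply_of_not 0 m σ (by omega)
  have key : ∀ t, rename (⇑(shiftPerm 0 m σ)) ((X s - C qv * X t) ^ (d - 1))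
      = (X s - C qv * X (shiftPerm 0 m σ t)) ^ (d - 1) := by
    intro t
    rw [map_pow, map_sub, map_mul, rename_X, rename_X, rename_C, hπs]
  simp_rw [key]
  rw [← Fin.prod_univ_eq_prod_range (fun t => (X s - C qv * X t) ^ (d - 1)) m,
    ← Fin.prod_univ_eq_prod_range
      (fun t => (X s - C qv * X ((shiftPerm 0 m σ) t)) ^ (d - 1)) m]
  rw [← Equiv.prod_comp σ (fun i : Fin m => (X s - C qv * X (i : ℕ)) ^ (d - 1))]
  refine Finset.prod_congr rfl fun i _ => ?_
  have h : (shiftPerm 0 m σ) (i : ℕ) = ((σ i : Fin m) : ℕ) := by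
    simpa using shiftPerm_apply_add 0 m σ i
  rw [h]

lemma rename_gPoly_right (d m n : ℕ) (σ : Equiv.Perm (Fin m)) :
    rename (⇑(shiftPerm n m σ)) (gPoly d n m) = gPoly d n m := by
  rw [gPoly, map_prod]
  have key : ∀ s, rename (⇑(shiftPerm n m σ)) (∏ t ∈ Finset.range n, (X s - C qv * X t) ^ (d - 1))
      = ∏ t ∈ Finset.range n, (X (shiftPerm n m σ s) - C qv * X t) ^ (d - 1) := by
    intro s
    rw [map_prod]
    refine Finset.prod_congr rfl fun t ht => ?_
    rw [Finset.mem_range] at ht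
    have h : shiftPerm n m σ t = t := shiftPerm_apply_of_not n m σ (by omega)
    rw [map_pow, map_sub, map_mul, rename_X, rename_X, rename_C, h]
  simp_rw [key]
  rw [Finset.prod_Ico_eq_prod_range, Finset.prod_Ico_eq_prod_range]
  simp only [Nat.add_sub_cancel_left]
  rw [← Fin.prod_univ_eq_prod_range
      (fun i => ∏ t ∈ Finset.range n, (X (n + i) - C qv * X t) ^ (d - 1)) m,
    ← Fin.prod_univ_eq_prod_range
      (fun i => ∏ t ∈ Finset.range n, (X ((shiftPerm n m σ) (n + i)) - C qv * X t) ^ (d - 1)) m]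
  rw [← Equiv.prod_comp σ
      (fun i : Fin m => ∏ t ∈ Finset.range n, (X (n + (i : ℕ)) - C qv * X t) ^ (d - 1))]
  refine Finset.prod_congr rfl fun i _ => ?_
  rw [shiftPerm_apply_add n m σ i]

/-- The extension of `σ : Perm (Fin m)` to `Fin (m+n)`, acting on the first block. -/
def tauLeft (m n : ℕ) (σ : Equiv.Perm (Fin m)) : Equiv.Perm (Fin (m + n)) :=
  finSumFinEquiv.symm.trans ((Equiv.sumCongr σ (Equiv.refl (Fin n))).trans finSumFinEquiv)

/-- The extension of `σ : Perm (Fin m)` to `Fin (n+m)`, acting on the second block. -/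
def tauRight (m n : ℕ) (σ : Equiv.Perm (Fin m)) : Equiv.Perm (Fin (n + m)) :=
  finSumFinEquiv.symm.trans ((Equiv.sumCongr (Equiv.refl (Fin n)) σ).trans finSumFinEquiv)

lemma tauLeft_castAdd (m n : ℕ) (σ : Equiv.Perm (Fin m)) (i : Fin m) :
    tauLeft m n σ (Fin.castAdd n i) = Fin.castAdd n (σ i) := by
  simp [tauLeft]

lemma tauLeft_natAdd (m n : ℕ) (σ : Equiv.Perm (Fin m)) (j : Fin n) :
    tauLeft m n σ (Fin.natAdd m j) = Fin.natAdd m j := by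
  simp [tauLeft]

lemma tauRight_castAdd (m n : ℕ) (σ : Equiv.Perm (Fin m)) (i : Fin n) :
    tauRight m n σ (Fin.castAdd m i) = Fin.castAdd m i := by
  simp [tauRight]

lemma tauRight_natAdd (m n : ℕ) (σ : Equiv.Perm (Fin m)) (j : Fin m) :
    tauRight m n σ (Fin.natAdd n j) = Fin.natAdd n (σ j) := by
  simp [tauRight]

lemma basisMul_sub_left (d m n : ℕ) (μ : Fin m → ℕ) (σ : Equiv.Perm (Fin m)) (w : Fin n → ℕ) :
    basisMul d (⟨m, μ⟩ : LambdaHat) (⟨n, w⟩ : LambdaHat)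
      - basisMul d (⟨m, μ ∘ σ⟩ : LambdaHat) (⟨n, w⟩ : LambdaHat) ∈ Wspan := by
  refine mem_Wspan_core (m + n) (gPoly d m n) (shiftPerm 0 m σ)
    (rename_gPoly_left d m n σ) (tauLeft m n σ)
    (fun e => Fin.append (fun i => μ i + e (i : ℕ)) (fun j => w j + e (m + (j : ℕ))))
    (fun e => Fin.append (fun i => (μ ∘ σ) i + e (i : ℕ)) (fun j => w j + e (m + (j : ℕ))))
    ?_
  intro e
  funext k
  refine Fin.addCases (fun i => ?_) (fun j => ?_) k
  · simp only [Function.comp_apply, tauLeft_castAdd, Fin.append_left, Fin.coe_castAdd,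
      Finsupp.mapDomain_equiv_apply, Equiv.symm_symm]
    have h : (shiftPerm 0 m σ) (i : ℕ) = ((σ i : Fin m) : ℕ) := by
      simpa using shiftPerm_apply_add 0 m σ i
    rw [h]
  · simp only [Function.comp_apply, tauLeft_natAdd, Fin.append_right, Fin.coe_natAdd,
      Finsupp.mapDomain_equiv_apply, Equiv.symm_symm]
    rw [shiftPerm_apply_of_not 0 m σ (by omega)]

lemma basisMul_sub_right (d m n : ℕ) (μ : Fin m → ℕ) (σ : Equiv.Perm (Fin m)) (w : Fin n → ℕ) :
    basisMul d (⟨n, w⟩ : LambdaHat) (⟨m, μ⟩ : LambdaHat)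
      - basisMul d (⟨n, w⟩ : LambdaHat) (⟨m, μ ∘ σ⟩ : LambdaHat) ∈ Wspan := by
  refine mem_Wspan_core (n + m) (gPoly d n m) (shiftPerm n m σ)
    (rename_gPoly_right d m n σ) (tauRight m n σ)
    (fun e => Fin.append (fun i => w i + e (i : ℕ)) (fun j => μ j + e (n + (j : ℕ))))
    (fun e => Fin.append (fun i => w i + e (i : ℕ)) (fun j => (μ ∘ σ) j + e (n + (j : ℕ))))
    ?_
  intro e
  funext k
  refine Fin.addCases (fun i => ?_) (fun j => ?_) k
  · simp only [Function.comp_apply, tauRight_castAdd, Fin.append_left, Fin.coe_castAdd,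
      Finsupp.mapDomain_equiv_apply, Equiv.symm_symm]
    rw [shiftPerm_apply_of_not n m σ (by have := i.isLt; omega)]
  · simp only [Function.comp_apply, tauRight_natAdd, Fin.append_right, Fin.coe_natAdd,
      Finsupp.mapDomain_equiv_apply, Equiv.symm_symm]
    rw [shiftPerm_apply_add n m σ j]

/-- `W` is a two-sided ideal of `𝔸^d_q(Λ̂)`: both `(μ − σ(μ)) * w` and
`w * (μ − σ(μ))` lie in `W`. -/
theorem Wspan_two_sided_ideal (d : ℕ) (hd : 0 < d) (m n : ℕ) (μ : Fin m → ℕ)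
    (σ : Equiv.Perm (Fin m)) (w : Fin n → ℕ) :
    amul d (Finsupp.single (⟨m, μ⟩ : LambdaHat) 1 - Finsupp.single (⟨m, μ ∘ σ⟩ : LambdaHat) 1)
        (Finsupp.single (⟨n, w⟩ : LambdaHat) 1) ∈ Wspan ∧
    amul d (Finsupp.single (⟨n, w⟩ : LambdaHat) 1)
        (Finsupp.single (⟨m, μ⟩ : LambdaHat) 1 - Finsupp.single (⟨m, μ ∘ σ⟩ : LambdaHat) 1)
      ∈ Wspan := by
  constructor
  · have key0 : amul d (Finsupp.single (⟨m, μ⟩ : LambdaHat) 1 - Finsupp.single (⟨m, μ ∘ σ⟩ : LambdaHat) 1)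
          (Finsupp.single (⟨n, w⟩ : LambdaHat) 1)
          = basisMul d (⟨m, μ⟩ : LambdaHat) (⟨n, w⟩ : LambdaHat)
            - basisMul d (⟨m, μ ∘ σ⟩ : LambdaHat) (⟨n, w⟩ : LambdaHat) :=
      amul_single_sub d _ _ _
    rw [key0]
    exact basisMul_sub_left d m n μ σ w
  · have key : amul d (Finsupp.single (⟨n, w⟩ : LambdaHat) 1)
        (Finsupp.single (⟨m, μ⟩ : LambdaHat) 1 - Finsupp.single (⟨m, μ ∘ σ⟩ : LambdaHat) 1)
        = basisMul d (⟨n, w⟩ : LambdaHat) (⟨m, μ⟩ : LambdaHat)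
          - basisMul d (⟨n, w⟩ : LambdaHat) (⟨m, μ ∘ σ⟩ : LambdaHat) :=
      amul_sub_single d _ _ _
    rw [key]
    exact basisMul_sub_right d m n μ σ w

end
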